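/- On an infinite-dimensional separable Hilbert space, every density operator lies on the algebraic boundary of the set of states; equivalently, no density operator ϱ satisfies |v⟩⟨v| ≤_C ϱ for all unit vectors |v⟩. Consequently b(ϱ) = 0 for every state ϱ. -/

import Mathlib

open scoped InnerProductSpace

/-- The weight function `t_y(x) = sup{ t ∈ [0,1) : (y - t·x)/(1-t) ∈ Z }`. -/
noncomputable def weight {V : Type*} [AddCommGroup V] [Module ℝ V] (Z : Set V) (y x : V) : ℝ :=
  sSup {t : ℝ | 0 ≤ t ∧ t < 1 ∧ (1 - t)⁻¹ • (y - t • x) ∈ Z}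

/-- The boundariness `b(y) = inf_{x ∈ Z} t_y(x)`. -/
noncomputable def bdness {V : Type*} [AddCommGroup V] [Module ℝ V] (Z : Set V) (y : V) : ℝ :=
  sInf (weight Z y '' Z)

/-- The set of states on a Hilbert space `H`: positive (trace-class) operators whose trace,
computed in any Hilbert basis, is 1. -/
def States (H : Type*) [NormedAddCommGroup H] [InnerProductSpace ℂ H] [CompleteSpace H] :
    Set (H →L[ℂ] H) :=
  {T | T.IsPositive ∧ ∀ b : HilbertBasis ℕ ℂ H,
    HasSum (fun i => (⟪b i, T (b i)⟫_ℂ).re) 1}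

lemma exists_hilbertBasis_nat (H : Type*) [NormedAddCommGroup H] [InnerProductSpace ℂ H]
    [CompleteSpace H] [TopologicalSpace.SeparableSpace H]
    (hinf : ¬ FiniteDimensional ℂ H) : Nonempty (HilbertBasis ℕ ℂ H) := by
  obtain ⟨w, b, hb⟩ := exists_hilbertBasis ℂ H
  have hw : Orthonormal ℂ ((↑) : w → H) := hb ▸ b.orthonormal
  have hrange : Set.range ⇑b = w := by rw [hb, Subtype.range_coe]
  -- any two distinct elements of w are at distance ≥ 1
  have hdist : ∀ p ∈ w, ∀ q ∈ w, p ≠ q → (1 : ℝ) ≤ dist p q := by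
    intro p hp q hq hpq
    have h1 : ‖((⟨p, hp⟩ : w) : H)‖ = 1 := hw.1 ⟨p, hp⟩
    have h2 : ‖((⟨q, hq⟩ : w) : H)‖ = 1 := hw.1 ⟨q, hq⟩
    have h3 : ⟪((⟨p, hp⟩ : w) : H), ((⟨q, hq⟩ : w) : H)⟫_ℂ = 0 :=
      hw.2 (by simpa using hpq : (⟨p, hp⟩ : w) ≠ ⟨q, hq⟩)
    have : ‖p - q‖ ^ 2 = 2 := by
      have := @norm_sub_sq ℂ H _ _ _ p q
      simp only [h3, map_zero] at this
      simp only [this]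
      rw [show ((⟨p, hp⟩ : w) : H) = p from rfl] at h1
      rw [show ((⟨q, hq⟩ : w) : H) = q from rfl] at h2
      rw [h1, h2]; norm_num
    rw [dist_eq_norm]
    nlinarith [norm_nonneg (p - q)]
  have hcount : w.Countable := by
    apply Set.PairwiseDisjoint.countable_of_isOpen (s := fun p => Metric.ball p (1/2))
    · intro p hp q hq hpq
      exact Metric.ball_disjoint_ball (by linarith [hdist p hp q hq hpq])
    · intro p _; exact Metric.isOpen_ball
    · intro p _; exact Metric.nonempty_ball.2 (by norm_num)
  have hwinf : w.Infinite := by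
    by_contra hfin
    rw [Set.not_infinite] at hfin
    have hfd : FiniteDimensional ℂ (Submodule.span ℂ w) := FiniteDimensional.span_of_finite ℂ hfin
    have hclosed : IsClosed ((Submodule.span ℂ w : Submodule ℂ H) : Set H) :=
      Submodule.closed_of_finiteDimensional _
    have htop : Submodule.span ℂ w = ⊤ := by
      have := b.dense_span
      rw [hrange] at this
      rwa [hclosed.submodule_topologicalClosure_eq] at this
    rw [htop] at hfd
    exact hinf (Submodule.topEquiv.finiteDimensional)
  haveI := hcount.to_subtype
  haveI : Infinite w := hwinf.to_subtype
  obtain ⟨D⟩ := nonempty_denumerable w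
  let g : ℕ ≃ w := (Denumerable.eqv w).symm
  have hv : Orthonormal ℂ (fun n => ((g n : w) : H)) := hw.comp g g.injective
  refine ⟨HilbertBasis.mk hv ?_⟩
  have hrg : Set.range (fun n => ((g n : w) : H)) = w := by
    have : Set.range (fun n => ((g n : w) : H)) = Subtype.val '' Set.range g := by
      rw [← Set.range_comp]; rfl
    rw [this, Equiv.range_eq_univ, Set.image_univ, Subtype.range_coe]
  rw [hrg]
  have := b.dense_span
  rw [hrange] at this
  rw [this]

theorem infinite_dim_states_all_boundary {H : Type*} [NormedAddCommGroup H]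
    [InnerProductSpace ℂ H] [CompleteSpace H] [TopologicalSpace.SeparableSpace H]
    (hinf : ¬ FiniteDimensional ℂ H)
    (ϱ : H →L[ℂ] H) (hϱ : ϱ ∈ States H) :
    (∃ x ∈ States H, weight (States H) ϱ x = 0) ∧
    (¬ ∀ v : H, ‖v‖ = 1 → ∃ t : ℝ, 0 < t ∧ t ≤ 1 ∧ ∃ z ∈ States H,
        ϱ = t • ((innerSL ℂ v).smulRight v) + (1 - t) • z) ∧
    bdness (States H) ϱ = 0 := by
  classical
  obtain ⟨e⟩ := exists_hilbertBasis_nat H hinf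
  set d : ℕ → ℝ := fun n => (⟪e n, ϱ (e n)⟫_ℂ).re with hdDef
  have hd1 : HasSum d 1 := hϱ.2 e
  have hdto : Filter.Tendsto d Filter.atTop (nhds 0) := hd1.summable.tendsto_atTop_zero
  obtain ⟨φ, hφm, hφ⟩ : ∃ φ : ℕ → ℕ, StrictMono φ ∧ ∀ k, d (φ k) < (4:ℝ)⁻¹ ^ k :=
    Filter.extraction_forall_of_eventually (fun k =>
      hdto.eventually_lt_const (by positivity : (0:ℝ) < (4:ℝ)⁻¹ ^ k))
  -- the coefficients
  set a : ℕ → ℝ := fun k => (2:ℝ)⁻¹ ^ (k+1) with haDef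
  have ha0 : ∀ k, 0 < a k := fun k => by positivity
  have hasum : HasSum a 1 := by
    have h := (hasSum_geometric_of_lt_one (by norm_num : (0:ℝ) ≤ 2⁻¹)
      (by norm_num : (2:ℝ)⁻¹ < 1)).mul_right 2⁻¹
    norm_num at h
    convert h using 2 with k
    · rfl
    · rw [haDef]; ring
  set c : ℕ → ℝ := fun k => Real.sqrt (a k) with hcDef
  have hc0 : ∀ k, 0 ≤ c k := fun k => Real.sqrt_nonneg _
  have hcsq : ∀ k, c k ^ 2 = a k := fun k => Real.sq_sqrt (ha0 k).le
  have hcgeo : ∀ k, c k = Real.sqrt 2⁻¹ ^ (k+1) := by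
    intro k
    have h2 : (Real.sqrt 2⁻¹ ^ (k+1)) ^ 2 = a k := by
      rw [← pow_mul, mul_comm, pow_mul, Real.sq_sqrt (by norm_num : (0:ℝ) ≤ 2⁻¹), haDef]
    show Real.sqrt (a k) = Real.sqrt 2⁻¹ ^ (k+1)
    rw [← h2, Real.sqrt_sq (by positivity)]
  have hsqrtlt : Real.sqrt 2⁻¹ < 1 := by
    rw [show (1:ℝ) = Real.sqrt 1 by simp]
    exact Real.sqrt_lt_sqrt (by norm_num) (by norm_num)
  -- the vector v
  have hFsummable : Summable (fun k => (c k : ℂ) • e (φ k)) := by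
    apply Summable.of_norm
    have hn : ∀ k, ‖(c k : ℂ) • e (φ k)‖ = c k := by
      intro k
      rw [norm_smul, Complex.norm_real, Real.norm_of_nonneg (hc0 k), e.orthonormal.1 (φ k),
        mul_one]
    simp only [hn]
    exact ((summable_geometric_of_lt_one (Real.sqrt_nonneg _) hsqrtlt).mul_right
      (Real.sqrt 2⁻¹)).congr fun k => by rw [hcgeo, pow_succ]
  set v : H := ∑' k, (c k : ℂ) • e (φ k) with hvDef
  have hv : HasSum (fun k => (c k : ℂ) • e (φ k)) v := hFsummable.hasSum
  have eortho := orthonormal_iff_ite.mp e.orthonormal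
  -- coefficients of v
  have hcoef : ∀ j, ⟪e (φ j), v⟫_ℂ = (c j : ℂ) := by
    intro j
    have h := (innerSL ℂ (e (φ j))).hasSum hv
    have h2 : HasSum (fun k => if k = j then (c j : ℂ) else 0) (c j : ℂ) :=
      hasSum_ite_eq j _
    have heq : (fun k => (innerSL ℂ (e (φ j))) ((c k : ℂ) • e (φ k)))
        = fun k => if k = j then (c j : ℂ) else 0 := by
      funext k
      simp only [innerSL_apply_apply, inner_smul_right, eortho]
      by_cases hkj : k = j
      · subst hkj; simp
      · rw [if_neg (fun hc => hkj (hφm.injective hc).symm), if_neg hkj, mul_zero]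
    rw [heq] at h
    simpa [innerSL_apply_apply] using h.unique h2
  -- v is a unit vector
  have hvv : ⟪v, v⟫_ℂ = 1 := by
    have h := (innerSL ℂ v).hasSum hv
    have heq : (fun k => (innerSL ℂ v) ((c k : ℂ) • e (φ k))) = fun k => ((a k : ℝ) : ℂ) := by
      funext k
      simp only [innerSL_apply_apply, inner_smul_right, ← inner_conj_symm v (e (φ k))]
      rw [hcoef k]
      rw [Complex.conj_ofReal, ← Complex.ofReal_mul, ← hcsq k, sq]
    rw [heq] at h
    have h2 : HasSum (fun k => ((a k : ℝ) : ℂ)) 1 := by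
      exact Complex.hasSum_ofReal.mpr hasum
    simpa [innerSL_apply_apply] using h.unique h2
  have hnv : ‖v‖ = 1 := by
    have h := inner_self_eq_norm_sq_to_K (𝕜 := ℂ) v
    rw [hvv] at h
    have h2 : (‖v‖ : ℝ) ^ 2 = 1 := by
      have h3 := h.symm
      rw [← RCLike.ofReal_pow, ← RCLike.ofReal_one (K := ℂ), RCLike.ofReal_inj] at h3
      exact h3
    nlinarith [norm_nonneg v]
  -- the rank-one projection onto v
  set x : H →L[ℂ] H := (innerSL ℂ v).smulRight v with hxDef
  have hxapp : ∀ w : H, x w = ⟪v, w⟫_ℂ • v := fun w => rfl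
  have hxinner : ∀ w : H, ⟪w, x w⟫_ℂ = ((‖⟪v, w⟫_ℂ‖ ^ 2 : ℝ) : ℂ) := by
    intro w
    rw [hxapp, inner_smul_right, ← inner_conj_symm w v, Complex.mul_conj]
    simp [Complex.normSq_eq_norm_sq]
  have hxinner_re : ∀ w : H, (⟪w, x w⟫_ℂ).re = ‖⟪v, w⟫_ℂ‖ ^ 2 := by
    intro w; rw [hxinner]; exact Complex.ofReal_re _
  have hx : x ∈ States H := by
    refine ⟨⟨?_, ?_⟩, ?_⟩
    · intro w u
      show ⟪x w, u⟫_ℂ = ⟪w, x u⟫_ℂ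
      rw [hxapp, hxapp, inner_smul_left, inner_smul_right, inner_conj_symm]
      ring
    · intro w
      have : ContinuousLinearMap.reApplyInnerSelf x w = (⟪x w, w⟫_ℂ).re := rfl
      rw [this, ← inner_conj_symm (x w) w, Complex.conj_re, hxinner_re]
      positivity
    · intro b
      have h := b.hasSum_inner_mul_inner v v
      rw [hvv] at h
      have h2 := Complex.reCLM.hasSum h
      simp only [Complex.reCLM_apply, Complex.one_re] at h2
      refine h2.congr_fun fun i => ?_
      rw [hxapp, inner_smul_right]
  -- the key contradiction
  have hkey : ∀ t : ℝ, 0 < t → (∀ w : H, t * ‖⟪v, w⟫_ℂ‖ ^ 2 ≤ (⟪w, ϱ w⟫_ℂ).re) → False := by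
    intro t ht hle
    obtain ⟨k, hk⟩ : ∃ k : ℕ, (2:ℝ)⁻¹ ^ k < t / 2 :=
      exists_pow_lt_of_lt_one (by linarith) (by norm_num)
    have h1 := hle (e (φ k))
    have h2 : ‖⟪v, e (φ k)⟫_ℂ‖ ^ 2 = a k := by
      rw [norm_inner_symm, hcoef k, Complex.norm_real, Real.norm_of_nonneg (hc0 k), hcsq]
    rw [h2] at h1
    have h3 : (⟪e (φ k), ϱ (e (φ k))⟫_ℂ).re = d (φ k) := rfl
    rw [h3] at h1
    have h4 : d (φ k) < (4:ℝ)⁻¹ ^ k := hφ k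
    have h5 : (4:ℝ)⁻¹ ^ k = (2:ℝ)⁻¹ ^ k * (2:ℝ)⁻¹ ^ k := by
      rw [← mul_pow]; norm_num
    have h6 : t * a k = (t / 2) * (2:ℝ)⁻¹ ^ k := by
      show t * (2:ℝ)⁻¹ ^ (k+1) = (t / 2) * (2:ℝ)⁻¹ ^ k
      rw [pow_succ]; ring
    have hp : (0:ℝ) < (2:ℝ)⁻¹ ^ k := by positivity
    nlinarith
  -- positivity inequality for states
  have hStpos : ∀ z : H →L[ℂ] H, z ∈ States H → ∀ w : H, 0 ≤ (⟪w, z w⟫_ℂ).re := by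
    intro z hz w
    have h := hz.1.2 w
    have h2 : ContinuousLinearMap.reApplyInnerSelf z w = (⟪z w, w⟫_ℂ).re := rfl
    rw [h2, ← inner_conj_symm (z w) w, Complex.conj_re] at h
    exact h
  -- the inner products of x
  have hreal : ∀ (r : ℝ) (u : H) (w : H), (⟪w, r • u⟫_ℂ).re = r * (⟪w, u⟫_ℂ).re := by
    intro r u w
    rw [show r • u = (r : ℂ) • u from (RCLike.real_smul_eq_coe_smul (K := ℂ) r u), inner_smul_right]
    exact Complex.re_ofReal_mul r _
  -- First conjunct
  have hS : {s : ℝ | 0 ≤ s ∧ s < 1 ∧ (1 - s)⁻¹ • (ϱ - s • x) ∈ States H} = {0} := by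
    apply Set.eq_singleton_iff_unique_mem.mpr
    constructor
    · refine ⟨le_refl 0, one_pos, ?_⟩
      simpa using hϱ
    · rintro s ⟨hs0, hs1, hsmem⟩
      by_contra hne
      have hspos : 0 < s := lt_of_le_of_ne hs0 (Ne.symm hne)
      refine hkey s hspos fun w => ?_
      have hzp := hStpos _ hsmem w
      have hval : (⟪w, ((1 - s)⁻¹ • (ϱ - s • x)) w⟫_ℂ).re
          = (1 - s)⁻¹ * ((⟪w, ϱ w⟫_ℂ).re - s * (⟪w, x w⟫_ℂ).re) := by
        rw [show ((1 - s)⁻¹ • (ϱ - s • x)) w = (1 - s)⁻¹ • ((ϱ - s • x) w) from rfl, hreal]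
        congr 1
        rw [show (ϱ - s • x) w = ϱ w - s • (x w) from rfl, inner_sub_right, Complex.sub_re,
          hreal]
      rw [hval] at hzp
      have hinv : 0 < (1 - s)⁻¹ := inv_pos.mpr (by linarith)
      have hE : 0 ≤ (⟪w, ϱ w⟫_ℂ).re - s * (⟪w, x w⟫_ℂ).re := by nlinarith
      rw [← hxinner_re w]
      linarith
  have hwx : weight (States H) ϱ x = 0 := by
    rw [weight, hS]; exact csSup_singleton 0
  refine ⟨⟨x, hx, hwx⟩, ?_, ?_⟩
  · intro hall
    obtain ⟨t, ht0, ht1, z, hz, heq⟩ := hall v hnv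
    rw [← hxDef] at heq
    refine hkey t ht0 fun w => ?_
    have h1 : (⟪w, ϱ w⟫_ℂ).re = t * (⟪w, x w⟫_ℂ).re + (1 - t) * (⟪w, z w⟫_ℂ).re := by
      rw [heq, show (t • x + (1 - t) • z) w = t • (x w) + (1 - t) • (z w) from rfl,
        inner_add_right, Complex.add_re, hreal, hreal]
    have hz0 := hStpos z hz w
    have h2 : 0 ≤ (1 - t) * (⟪w, z w⟫_ℂ).re := mul_nonneg (by linarith) hz0
    rw [← hxinner_re w]
    linarith
  · have hmem : (0:ℝ) ∈ weight (States H) ϱ '' States H := ⟨x, hx, hwx⟩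
    have hlb : ∀ r ∈ weight (States H) ϱ '' States H, 0 ≤ r := by
      rintro r ⟨y, hy, rfl⟩
      rw [weight]
      apply le_csSup
      · exact ⟨1, fun u hu => le_of_lt hu.2.1⟩
      · exact ⟨le_refl 0, one_pos, by simpa using hϱ⟩
    rw [bdness]
    exact le_antisymm (csInf_le ⟨0, fun r hr => hlb r hr⟩ hmem) (le_csInf ⟨0, hmem⟩ hlb)
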